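/- Let p = 4k+1 be a prime and R a commutative ring of characteristic 2. For any a_i, b_i, c_i, a_j, b_j, c_j ∈ R, Q_p(a_i,b_i,c_i) · Q_p(a_j,b_j,c_j)^T = Q_p( a_i a_j , a_i b_j + b_i a_j + (k+1) b_i b_j + k (b_i c_j + c_i b_j) + k c_i c_j , a_i c_j + c_i a_j + k b_i b_j + k (b_i c_j + c_i b_j) + (k+1) c_i c_j ). -/

import Mathlib

open Matrix
open scoped Classical

/-- The quadratic residue circulant matrix `Q_p(a,b,c)`: the `p × p` matrix over `R`,
indexed by `ZMod p`, whose `(i,j)` entry is `a` if `i = j`, `b` if `j - i` is a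
nonzero quadratic residue modulo `p`, and `c` otherwise. -/
noncomputable def Qmat (p : ℕ) {R : Type*} [CommRing R] (a b c : R) :
    Matrix (ZMod p) (ZMod p) R :=
  Matrix.of fun i j => if i = j then a else if IsSquare (j - i) then b else c

open Finset in
private lemma sum_char_shift {p : ℕ} [Fact p.Prime] (hp : ringChar (ZMod p) ≠ 2)
    (d : ZMod p) (hd : d ≠ 0) :
    ∑ y : ZMod p, quadraticChar (ZMod p) y * quadraticChar (ZMod p) (y - d) = -1 := by
  set χ := quadraticChar (ZMod p) with hχ
  have h1 : ∀ y : ZMod p, χ y * χ (y - d) =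
      if y = 0 then 0 else χ (1 - d * y⁻¹) := by
    intro y
    split_ifs with h
    · simp [h, hχ]
    · have hy : y - d = y * (1 - d * y⁻¹) := by field_simp
      rw [hy, _root_.map_mul, ← mul_assoc, ← sq, quadraticChar_sq_one h, one_mul]
  simp_rw [h1]
  rw [Finset.sum_ite, Finset.sum_const_zero, zero_add]
  have h2 : ∑ y ∈ univ.filter (fun y : ZMod p => ¬ y = 0), χ (1 - d * y⁻¹)
      = ∑ z ∈ univ.filter (fun z : ZMod p => ¬ z = 1), χ z := by
    apply Finset.sum_nbij' (fun y => 1 - d * y⁻¹) (fun z => d * (1 - z)⁻¹)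
    · intro a ha
      simp only [mem_filter, mem_univ, true_and] at ha ⊢
      intro h
      apply hd
      have : d * a⁻¹ = 0 := by linear_combination -h
      rcases mul_eq_zero.1 this with h' | h'
      · exact h'
      · exact absurd (inv_eq_zero.1 h') ha
    · intro z hz
      simp only [mem_filter, mem_univ, true_and] at hz ⊢
      exact mul_ne_zero hd (inv_ne_zero (sub_ne_zero.2 (fun h => hz h.symm)))
    · intro a ha
      simp only [mem_filter, mem_univ, true_and] at ha
      field_simp
      rw [sub_sub_cancel, div_self hd]
    · intro z hz
      simp only [mem_filter, mem_univ, true_and] at hz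
      have : (1 : ZMod p) - z ≠ 0 := sub_ne_zero.2 (fun h => hz h.symm)
      field_simp
      ring
    · intro a _; rfl
  rw [h2]
  have h3 := quadraticChar_sum_zero (F := ZMod p) hp
  have h4 : ∑ z ∈ univ.filter (fun z : ZMod p => ¬ z = 1), χ z
      = (∑ z : ZMod p, χ z) - χ 1 := by
    rw [← Finset.sum_filter_add_sum_filter_not univ (fun z : ZMod p => z = 1) χ]
    simp [Finset.filter_eq']
  rw [h4, h3, _root_.map_one]
  ring

open Finset in
private lemma count4 {p : ℕ} [Fact p.Prime] (hp : ringChar (ZMod p) ≠ 2)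
    (hneg : IsSquare (-1 : ZMod p))
    (d : ZMod p) (hd : d ≠ 0) (ε₁ ε₂ : ℤ)
    (h1 : ε₁ = 1 ∨ ε₁ = -1) (h2 : ε₂ = 1 ∨ ε₂ = -1) :
    4 * ((((univ : Finset (ZMod p)) \ {0, d}).filter
        (fun y => quadraticChar (ZMod p) y = ε₁ ∧ quadraticChar (ZMod p) (y - d) = ε₂)).card : ℤ)
      = (p : ℤ) - 2 - (ε₁ + ε₂) * quadraticChar (ZMod p) d - ε₁ * ε₂ := by
  have hz : quadraticChar (ZMod p) (0 : ZMod p) = 0 := quadraticChar_zero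
  set χ : ZMod p → ℤ := fun y => quadraticChar (ZMod p) y with hχ
  set s : Finset (ZMod p) := univ \ {0, d} with hs
  have hmem : ∀ y ∈ s, y ≠ 0 ∧ y ≠ d := by
    intro y hy
    simp only [hs, mem_sdiff, mem_univ, true_and, mem_insert, mem_singleton] at hy
    exact ⟨fun h => hy (Or.inl h), fun h => hy (Or.inr h)⟩
  have hone : χ (-1 : ZMod p) = 1 := by
    rw [hχ]
    rw [quadraticChar_one_iff_isSquare (by
      intro h
      have : (1 : ZMod p) = 0 := by linear_combination -h
      exact one_ne_zero this)]
    exact hneg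
  have key : ∀ y ∈ s, (1 + ε₁ * χ y) * (1 + ε₂ * χ (y - d)) =
      if χ y = ε₁ ∧ χ (y - d) = ε₂ then 4 else 0 := by
    intro y hy
    obtain ⟨hy0, hyd⟩ := hmem y hy
    have d1' : χ y = 1 ∨ χ y = -1 := quadraticChar_dichotomy (F := ZMod p) hy0
    have d2' : χ (y - d) = 1 ∨ χ (y - d) = -1 :=
      quadraticChar_dichotomy (F := ZMod p) (a := y - d) (sub_ne_zero.2 hyd)
    split_ifs with h
    · obtain ⟨c1, c2⟩ := h
      rw [c1, c2]
      rcases h1 with rfl | rfl <;> rcases h2 with rfl | rfl <;> norm_num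
    · rcases h1 with rfl | rfl <;> rcases h2 with rfl | rfl <;>
        rcases d1' with e1 | e1 <;> rcases d2' with e2 | e2 <;>
        (rw [e1, e2] at h ⊢) <;> revert h <;> norm_num
  have hsum1 : ∑ y ∈ s, (1 + ε₁ * χ y) * (1 + ε₂ * χ (y - d)) =
      4 * ((s.filter (fun y => χ y = ε₁ ∧ χ (y - d) = ε₂)).card : ℤ) := by
    rw [Finset.sum_congr rfl key, Finset.sum_ite, Finset.sum_const_zero, add_zero,
      Finset.sum_const]
    push_cast
    ring
  have hsub : ({0, d} : Finset (ZMod p)) ⊆ univ := subset_univ _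
  have hpair : (0 : ZMod p) ≠ d := fun h => hd h.symm
  have hcard : (s.card : ℤ) = (p : ℤ) - 2 := by
    rw [hs, Finset.card_sdiff_of_subset hsub, Finset.card_univ, ZMod.card,
      Finset.card_insert_of_notMem (by simpa using hpair), Finset.card_singleton]
    have : 2 ≤ p := (Fact.out : p.Prime).two_le
    push_cast [Nat.cast_sub (by omega : 2 ≤ p)]
    ring
  have h0 : ∑ y : ZMod p, χ y = 0 := quadraticChar_sum_zero (F := ZMod p) hp
  have e1 : ∑ y ∈ s, χ y = - χ d := by
    have hh := Finset.sum_sdiff (f := fun y : ZMod p => χ y) hsub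
    rw [← hs, Finset.sum_pair hpair, h0] at hh
    have hz' : χ (0 : ZMod p) = 0 := hz
    rw [hz'] at hh
    linarith
  have e2 : ∑ y ∈ s, χ (y - d) = - χ d := by
    have hh := Finset.sum_sdiff (f := fun y : ZMod p => χ (y - d)) hsub
    rw [← hs, Finset.sum_pair hpair] at hh
    have h0' : ∑ y : ZMod p, χ (y - d) = 0 := by
      rw [← Equiv.sum_comp (Equiv.subRight d) χ] at h0
      simpa using h0
    have hmd : χ (0 - d) = χ d := by
      have hh2 : (0 : ZMod p) - d = (-1) * d := by ring
      rw [hh2]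
      show quadraticChar (ZMod p) ((-1) * d) = quadraticChar (ZMod p) d
      rw [_root_.map_mul]
      have : quadraticChar (ZMod p) (-1 : ZMod p) = 1 := hone
      rw [this, one_mul]
    have hdd : χ (d - d) = 0 := by rw [sub_self]; exact hz
    rw [hmd, hdd, h0'] at hh
    linarith
  have e3 : ∑ y ∈ s, χ y * χ (y - d) = -1 := by
    have hh := Finset.sum_sdiff (f := fun y : ZMod p => χ y * χ (y - d)) hsub
    rw [← hs, Finset.sum_pair hpair] at hh
    have hfull : ∑ y : ZMod p, χ y * χ (y - d) = -1 := sum_char_shift hp d hd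
    have hz' : χ (0 : ZMod p) = 0 := hz
    have hdd : χ (d - d) = 0 := by rw [sub_self]; exact hz
    rw [hz', hdd, hfull] at hh
    simp only [zero_mul, mul_zero, add_zero, zero_add] at hh
    linarith
  rw [← hsum1,
    Finset.sum_congr rfl (fun y _ => by ring :
      ∀ y ∈ s, (1 + ε₁ * χ y) * (1 + ε₂ * χ (y - d)) =
        1 + ε₁ * χ y + ε₂ * χ (y - d) + ε₁ * ε₂ * (χ y * χ (y - d))),
    Finset.sum_add_distrib, Finset.sum_add_distrib, Finset.sum_add_distrib,
    ← Finset.mul_sum, ← Finset.mul_sum, ← Finset.mul_sum,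
    Finset.sum_const, e1, e2, e3]
  rw [nsmul_eq_mul, mul_one, hcard]
  ring

-- counts with IsSquare predicates, as naturals
open Finset in
private lemma countIs {p k : ℕ} [Fact p.Prime] (hp : ringChar (ZMod p) ≠ 2)
    (hneg : IsSquare (-1 : ZMod p)) (hpk : p = 4 * k + 1) (hk : 1 ≤ k)
    (d : ZMod p) (hd : d ≠ 0) :
    ((((univ : Finset (ZMod p)) \ {0, d}).filter
        (fun y => IsSquare y ∧ IsSquare (y - d))).card
      = if IsSquare d then k - 1 else k)
    ∧ (((univ : Finset (ZMod p)) \ {0, d}).filter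
        (fun y => IsSquare y ∧ ¬ IsSquare (y - d))).card = k
    ∧ (((univ : Finset (ZMod p)) \ {0, d}).filter
        (fun y => ¬ IsSquare y ∧ IsSquare (y - d))).card = k
    ∧ ((((univ : Finset (ZMod p)) \ {0, d}).filter
        (fun y => ¬ IsSquare y ∧ ¬ IsSquare (y - d))).card
      = if IsSquare d then k else k - 1) := by
  set s : Finset (ZMod p) := univ \ {0, d} with hs
  have hmem : ∀ y ∈ s, y ≠ 0 ∧ y ≠ d := by
    intro y hy
    simp only [hs, mem_sdiff, mem_univ, true_and, mem_insert, mem_singleton] at hy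
    exact ⟨fun h => hy (Or.inl h), fun h => hy (Or.inr h)⟩
  have hconv : ∀ ε₁ ε₂ : ℤ, (ε₁ = 1 ∨ ε₁ = -1) → (ε₂ = 1 ∨ ε₂ = -1) →
      ∀ (P : ZMod p → Prop),
      (∀ y : ZMod p, y ≠ 0 → y ≠ d →
        (P y ↔ (quadraticChar (ZMod p) y = ε₁ ∧ quadraticChar (ZMod p) (y - d) = ε₂))) →
      4 * ((s.filter P).card : ℤ)
        = (p : ℤ) - 2 - (ε₁ + ε₂) * quadraticChar (ZMod p) d - ε₁ * ε₂ := by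
    intro ε₁ ε₂ h1 h2 P hP
    have : s.filter P = s.filter
        (fun y => quadraticChar (ZMod p) y = ε₁ ∧ quadraticChar (ZMod p) (y - d) = ε₂) := by
      apply Finset.filter_congr
      intro y hy
      obtain ⟨hy0, hyd⟩ := hmem y hy
      exact hP y hy0 hyd
    rw [this]
    exact count4 hp hneg d hd ε₁ ε₂ h1 h2
  have hχd : quadraticChar (ZMod p) d = (if IsSquare d then 1 else -1) := by
    split_ifs with h
    · exact (quadraticChar_one_iff_isSquare hd).2 h
    · exact quadraticChar_neg_one_iff_not_isSquare.2 h
  have hQ : ∀ y : ZMod p, y ≠ 0 → (IsSquare y ↔ quadraticChar (ZMod p) y = 1) :=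
    fun y hy => (quadraticChar_one_iff_isSquare hy).symm
  have hN : ∀ y : ZMod p, (¬ IsSquare y ↔ quadraticChar (ZMod p) y = -1) :=
    fun y => (quadraticChar_neg_one_iff_not_isSquare).symm
  have c11 := hconv 1 1 (Or.inl rfl) (Or.inl rfl)
    (fun y => IsSquare y ∧ IsSquare (y - d))
    (fun y hy0 hyd => and_congr (hQ y hy0) (hQ (y - d) (sub_ne_zero.2 hyd)))
  have c1m := hconv 1 (-1) (Or.inl rfl) (Or.inr rfl)
    (fun y => IsSquare y ∧ ¬ IsSquare (y - d))
    (fun y hy0 _ => and_congr (hQ y hy0) (hN (y - d)))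
  have cm1 := hconv (-1) 1 (Or.inr rfl) (Or.inl rfl)
    (fun y => ¬ IsSquare y ∧ IsSquare (y - d))
    (fun y _ hyd => and_congr (hN y) (hQ (y - d) (sub_ne_zero.2 hyd)))
  have cmm := hconv (-1) (-1) (Or.inr rfl) (Or.inr rfl)
    (fun y => ¬ IsSquare y ∧ ¬ IsSquare (y - d))
    (fun y _ _ => and_congr (hN y) (hN (y - d)))
  have c11' : 4 * ((s.filter (fun y => IsSquare y ∧ IsSquare (y - d))).card : ℤ)
      = (p : ℤ) - 2 - (1 + 1) * quadraticChar (ZMod p) d - 1 * 1 := by rw [Finset.filter_congr_decidable] at c11; exact c11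
  have c1m' : 4 * ((s.filter (fun y => IsSquare y ∧ ¬ IsSquare (y - d))).card : ℤ)
      = (p : ℤ) - 2 - (1 + -1) * quadraticChar (ZMod p) d - 1 * (-1) := by rw [Finset.filter_congr_decidable] at c1m; exact c1m
  have cm1' : 4 * ((s.filter (fun y => ¬ IsSquare y ∧ IsSquare (y - d))).card : ℤ)
      = (p : ℤ) - 2 - (-1 + 1) * quadraticChar (ZMod p) d - (-1) * 1 := by rw [Finset.filter_congr_decidable] at cm1; exact cm1
  have cmm' : 4 * ((s.filter (fun y => ¬ IsSquare y ∧ ¬ IsSquare (y - d))).card : ℤ)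
      = (p : ℤ) - 2 - (-1 + -1) * quadraticChar (ZMod p) d - (-1) * (-1) := by rw [Finset.filter_congr_decidable] at cmm; exact cmm
  rw [hχd] at c11' c1m' cm1' cmm'
  have hpz : (p : ℤ) = 4 * k + 1 := by exact_mod_cast congrArg (Nat.cast : ℕ → ℤ) hpk
  split_ifs at c11' c1m' cm1' cmm' ⊢ with h <;>
    refine ⟨?_, ?_, ?_, ?_⟩ <;> omega

open Finset in
private lemma countSq {p k : ℕ} [Fact p.Prime] (hp : ringChar (ZMod p) ≠ 2)
    (hpk : p = 4 * k + 1) :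
    (((univ : Finset (ZMod p)) \ {0}).filter (fun y => IsSquare y)).card = 2 * k
    ∧ (((univ : Finset (ZMod p)) \ {0}).filter (fun y => ¬ IsSquare y)).card = 2 * k := by
  set s : Finset (ZMod p) := univ \ {0} with hs
  have hmem : ∀ y ∈ s, y ≠ 0 := by
    intro y hy
    simp only [hs, mem_sdiff, mem_univ, true_and, mem_singleton] at hy
    exact hy
  have key : ∀ y ∈ s, 1 + quadraticChar (ZMod p) y = if IsSquare y then 2 else 0 := by
    intro y hy
    rcases quadraticChar_dichotomy (F := ZMod p) (hmem y hy) with e | e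
    · rw [if_pos ((quadraticChar_one_iff_isSquare (hmem y hy)).1 e), e]; norm_num
    · rw [if_neg (quadraticChar_neg_one_iff_not_isSquare.1 e), e]; norm_num
  have hsum : ∑ y ∈ s, (1 + quadraticChar (ZMod p) y) =
      2 * ((s.filter (fun y => IsSquare y)).card : ℤ) := by
    rw [Finset.sum_congr rfl key, Finset.sum_ite, Finset.sum_const_zero, add_zero,
      Finset.sum_const, nsmul_eq_mul]
    ring
  have hcard : (s.card : ℤ) = (p : ℤ) - 1 := by
    rw [hs, Finset.card_sdiff_of_subset (subset_univ _), Finset.card_univ, ZMod.card,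
      Finset.card_singleton]
    have : 2 ≤ p := (Fact.out : p.Prime).two_le
    push_cast [Nat.cast_sub (by omega : 1 ≤ p)]
    ring
  have h0 : ∑ y : ZMod p, quadraticChar (ZMod p) y = 0 :=
    quadraticChar_sum_zero (F := ZMod p) hp
  have e1 : ∑ y ∈ s, quadraticChar (ZMod p) y = 0 := by
    have hh := Finset.sum_sdiff (f := fun y : ZMod p => (quadraticChar (ZMod p) y : ℤ))
      (subset_univ ({0} : Finset (ZMod p)))
    rw [← hs, Finset.sum_singleton, h0, quadraticChar_zero] at hh
    linarith
  have hsum2 : ∑ y ∈ s, (1 + quadraticChar (ZMod p) y) = (p : ℤ) - 1 := by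
    rw [Finset.sum_add_distrib, Finset.sum_const, e1, nsmul_eq_mul, mul_one, hcard, add_zero]
  have hQ : ((s.filter (fun y => IsSquare y)).card : ℤ) = 2 * k := by
    have hpz : (p : ℤ) = 4 * k + 1 := by exact_mod_cast congrArg (Nat.cast : ℕ → ℤ) hpk
    omega
  have hQn : (s.filter (fun y => IsSquare y)).card = 2 * k := by exact_mod_cast hQ
  refine ⟨hQn, ?_⟩
  have htot := Finset.card_filter_add_card_filter_not
    (s := s) (p := fun y => IsSquare y)
  have hcn : s.card = 4 * k := by
    have : 2 ≤ p := (Fact.out : p.Prime).two_le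
    omega
  omega

open Finset in
private lemma sum_ite_prod {R : Type*} [CommRing R] {α : Type*} (t : Finset α)
    (P Q : α → Prop) [DecidablePred P] [DecidablePred Q] (u v w z : R) :
    ∑ y ∈ t, (if P y then u else v) * (if Q y then w else z)
      = (t.filter (fun y => P y ∧ Q y)).card • (u * w)
      + (t.filter (fun y => P y ∧ ¬ Q y)).card • (u * z)
      + (t.filter (fun y => ¬ P y ∧ Q y)).card • (v * w)
      + (t.filter (fun y => ¬ P y ∧ ¬ Q y)).card • (v * z) := by
  rw [← Finset.sum_filter_add_sum_filter_not t P]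
  have h1 : ∑ y ∈ t.filter P, (if P y then u else v) * (if Q y then w else z)
      = ∑ y ∈ t.filter P, (if Q y then u * w else u * z) := by
    apply Finset.sum_congr rfl
    intro y hy
    rw [if_pos (Finset.mem_filter.1 hy).2, mul_ite]
  have h2 : ∑ y ∈ t.filter (fun y => ¬ P y), (if P y then u else v) * (if Q y then w else z)
      = ∑ y ∈ t.filter (fun y => ¬ P y), (if Q y then v * w else v * z) := by
    apply Finset.sum_congr rfl
    intro y hy
    rw [if_neg (Finset.mem_filter.1 hy).2, mul_ite]
  rw [h1, h2, Finset.sum_ite, Finset.sum_ite, Finset.sum_const, Finset.sum_const,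
    Finset.sum_const, Finset.sum_const, Finset.filter_filter, Finset.filter_filter,
    Finset.filter_filter, Finset.filter_filter]
  ring


theorem stmt0 {R : Type*} [CommRing R] [CharP R 2] (p k : ℕ) [Fact (Nat.Prime p)]
    (hpk : p = 4 * k + 1) (ai bi ci aj bj cj : R) :
    Qmat p ai bi ci * (Qmat p aj bj cj)ᵀ =
      Qmat p (ai * aj)
        (ai * bj + bi * aj + ((k : R) + 1) * (bi * bj) + (k : R) * (bi * cj + ci * bj) +
          (k : R) * (ci * cj))
        (ai * cj + ci * aj + (k : R) * (bi * bj) + (k : R) * (bi * cj + ci * bj) +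
          ((k : R) + 1) * (ci * cj)) := by
  have hprime : p.Prime := Fact.out
  have hk : 1 ≤ k := by have := hprime.two_le; omega
  have hp2 : ringChar (ZMod p) ≠ 2 := by rw [ZMod.ringChar_zmod_n]; omega
  have hneg : IsSquare (-1 : ZMod p) := ZMod.exists_sq_eq_neg_one_iff.2 (by omega)
  have h2R : (2 : R) = 0 := by exact_mod_cast CharP.cast_eq_zero R 2
  have hm1R : (-1 : R) = 1 := CharTwo.neg_eq 1
  have hkm1 : ((k - 1 : ℕ) : R) = (k : R) + 1 := by
    rw [Nat.cast_sub hk, Nat.cast_one, sub_eq_add_neg, hm1R]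
  ext i j
  rw [Matrix.mul_apply]
  set d := j - i with hd
  have hre : ∑ x : ZMod p, Qmat p ai bi ci i x * (Qmat p aj bj cj)ᵀ x j
      = ∑ y : ZMod p, (if y = 0 then ai else if IsSquare y then bi else ci) *
        (if y = d then aj else if IsSquare (y - d) then bj else cj) := by
    apply Fintype.sum_equiv (Equiv.subRight i)
    intro x
    simp only [Qmat, Matrix.transpose_apply, Matrix.of_apply, Equiv.subRight_apply]
    have hxd_iff : x - i = d ↔ j = x := by
      rw [hd]
      constructor
      · intro h
        exact (sub_left_inj.1 h).symm
      · intro h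
        rw [h]
    congr 1
    · by_cases h1 : i = x
      · subst h1; simp
      · have hxi : x - i ≠ 0 := fun h => h1 (sub_eq_zero.1 h).symm
        rw [if_neg h1, if_neg hxi]
        split_ifs <;> rfl
    · by_cases h2 : j = x
      · rw [if_pos h2, if_pos (hxd_iff.2 h2)]
      · rw [if_neg h2, if_neg (fun h => h2 (hxd_iff.1 h))]
        simp only [show x - i - d = x - j by rw [hd]; ring]
        split_ifs <;> rfl
  rw [hre]
  simp only [Qmat, Matrix.of_apply, ← hd]
  by_cases hij : i = j
  · rw [if_pos hij]
    have hd0 : d = 0 := by rw [hd, hij, sub_self]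
    simp only [hd0, sub_zero]
    rw [← Finset.sum_sdiff (Finset.subset_univ ({0} : Finset (ZMod p))),
      Finset.sum_singleton]
    have h00 : ((if (0 : ZMod p) = 0 then ai else if IsSquare (0 : ZMod p) then bi else ci) *
        (if (0 : ZMod p) = 0 then aj else if IsSquare (0 : ZMod p) then bj else cj)) = ai * aj := by
      rw [if_pos rfl, if_pos rfl]
    rw [h00]
    have hcongr : ∀ y ∈ (Finset.univ : Finset (ZMod p)) \ {0},
        ((if y = 0 then ai else if IsSquare y then bi else ci) *
          (if y = 0 then aj else if IsSquare y then bj else cj))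
        = (if IsSquare y then bi * bj else ci * cj) := by
      intro y hy
      simp only [Finset.mem_sdiff, Finset.mem_singleton] at hy
      rw [if_neg hy.2, if_neg hy.2]
      split_ifs <;> ring
    rw [Finset.sum_congr rfl hcongr, Finset.sum_ite, Finset.sum_const, Finset.sum_const,
      (countSq hp2 hpk).1, (countSq hp2 hpk).2, nsmul_eq_mul, nsmul_eq_mul]
    push_cast
    rw [h2R]
    ring
  · rw [if_neg hij]
    have hd0 : d ≠ 0 := sub_ne_zero.2 (fun h => hij h.symm)
    have hpair : (0 : ZMod p) ≠ d := fun h => hd0 h.symm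
    obtain ⟨cQQ, cQN, cNQ, cNN⟩ := countIs hp2 hneg hpk hk d hd0
    rw [← Finset.sum_sdiff (Finset.subset_univ ({0, d} : Finset (ZMod p))),
      Finset.sum_pair hpair]
    have hiff : IsSquare (-d : ZMod p) ↔ IsSquare d := by
      constructor
      · intro h
        have := hneg.mul h
        simpa using this
      · intro h
        have := hneg.mul h
        simpa using this
    have ht0 : ((if (0 : ZMod p) = 0 then ai else if IsSquare (0 : ZMod p) then bi else ci) *
        (if (0 : ZMod p) = d then aj else if IsSquare ((0 : ZMod p) - d) then bj else cj))
        = ai * (if IsSquare d then bj else cj) := by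
      rw [if_pos rfl, if_neg hpair, zero_sub]
      congr 1
      simp only [hiff]
    have htd : ((if d = 0 then ai else if IsSquare d then bi else ci) *
        (if d = d then aj else if IsSquare (d - d) then bj else cj))
        = (if IsSquare d then bi else ci) * aj := by
      rw [if_neg hd0, if_pos rfl]
    rw [ht0, htd]
    have hcongr : ∀ y ∈ (Finset.univ : Finset (ZMod p)) \ {0, d},
        ((if y = 0 then ai else if IsSquare y then bi else ci) *
          (if y = d then aj else if IsSquare (y - d) then bj else cj))
        = (if IsSquare y then bi else ci) * (if IsSquare (y - d) then bj else cj) := by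
      intro y hy
      simp only [Finset.mem_sdiff, Finset.mem_insert, Finset.mem_singleton] at hy
      push_neg at hy
      rw [if_neg hy.2.1, if_neg hy.2.2]
    rw [Finset.sum_congr rfl hcongr,
      sum_ite_prod ((Finset.univ : Finset (ZMod p)) \ {0, d})
        (fun y => IsSquare y) (fun y => IsSquare (y - d)) bi ci bj cj,
      cQQ, cQN, cNQ, cNN]
    by_cases hsd : IsSquare d
    · have hsd' : IsSquare (j - i) := hd ▸ hsd
      rw [if_pos hsd, if_pos hsd, if_pos hsd, if_pos hsd, if_pos hsd']
      rw [nsmul_eq_mul, nsmul_eq_mul, nsmul_eq_mul, nsmul_eq_mul, hkm1]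
      ring
    · have hsd' : ¬ IsSquare (j - i) := fun h => hsd (by rw [hd]; exact h)
      rw [if_neg hsd, if_neg hsd, if_neg hsd, if_neg hsd, if_neg hsd']
      rw [nsmul_eq_mul, nsmul_eq_mul, nsmul_eq_mul, nsmul_eq_mul, hkm1]
      ring
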